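/- Let γ_p be the standard Gaussian measure on ℝ^p, let H = {x ∈ ℝ^p : ⟨x, v⟩ = c} be a hyperplane with unit normal vector v and c ≥ 0, let F ⊂ H be a Borel set, and let N_F(δ) = {x + t v : x ∈ F, 0 < t ≤ δ} for δ > 0. Then lim_{δ ↓ 0} γ_p(N_F(δ))/δ = ∫_F φ_p dσ, where σ is the (p−1)-dimensional Hausdorff measure restricted to H and φ_p is the standard Gaussian density. -/

import Mathlib

open MeasureTheory Filter
open scoped RealInnerProductSpace Topology

/-- The standard Gaussian measure `γ_p` on `ℝ^p`, given by its density
`φ_p(x) = (2π)^{−p/2} e^{−‖x‖²/2}` with respect to Lebesgue measure. -/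
noncomputable def stdGaussian (p : ℕ) : Measure (EuclideanSpace ℝ (Fin p)) :=
  volume.withDensity fun x =>
    ENNReal.ofReal ((2 * Real.pi) ^ (-(p : ℝ) / 2) * Real.exp (-‖x‖ ^ 2 / 2))

/-- The standard Gaussian density `φ_p(x) = (2π)^{−p/2} e^{−‖x‖²/2}` on `ℝ^p`. -/
noncomputable def stdGaussianDensity (p : ℕ) (x : EuclideanSpace ℝ (Fin p)) : ℝ :=
  (2 * Real.pi) ^ (-(p : ℝ) / 2) * Real.exp (-‖x‖ ^ 2 / 2)

/-- The standard surface (Lebesgue) measure on the hyperplane `{x : ⟨x, v⟩ = c}` with unit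
normal `v`: the pushforward of the canonical Lebesgue measure on the orthogonal complement of
`v` under the affine isometry `w ↦ c • v + w` onto the hyperplane.  (For sets contained in the
hyperplane it coincides with the (`p−1`)-dimensional Hausdorff measure, suitably normalized.) -/
noncomputable def surfMeasure {p : ℕ} (v : EuclideanSpace ℝ (Fin p)) (c : ℝ) :
    Measure (EuclideanSpace ℝ (Fin p)) :=
  Measure.map (fun w : (Submodule.span ℝ {v})ᗮ => c • v + (w : EuclideanSpace ℝ (Fin p))) volume

section AuxiliaryLemmas

variable {n : ℕ} {v : EuclideanSpace ℝ (Fin (n + 1))}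

noncomputable def auxONB (hv : ‖v‖ = 1)
    (b : OrthonormalBasis (Fin n) ℝ ((Submodule.span ℝ {v})ᗮ : Submodule ℝ _)) :
    OrthonormalBasis (Fin (n + 1)) ℝ (EuclideanSpace ℝ (Fin (n + 1))) := by
  have hKv : ∀ w : ((Submodule.span ℝ {v})ᗮ : Submodule ℝ (EuclideanSpace ℝ (Fin (n+1)))),
      ⟪(w : EuclideanSpace ℝ (Fin (n + 1))), v⟫ = 0 := fun w =>
    Submodule.mem_orthogonal_singleton_iff_inner_left.mp w.2
  refine OrthonormalBasis.mk (v := Fin.cons v fun i => (b i : EuclideanSpace ℝ (Fin (n + 1))))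
    ?_ ?_
  · rw [orthonormal_iff_ite]
    intro i j
    induction i using Fin.cases with
    | zero =>
      induction j using Fin.cases with
      | zero =>
        simp only [Fin.cons_zero, if_pos rfl]
        rw [real_inner_self_eq_norm_sq, hv]; norm_num
      | succ j =>
        simp only [Fin.cons_zero, Fin.cons_succ, if_neg (Fin.succ_ne_zero j).symm]
        rw [real_inner_comm]; exact hKv (b j)
    | succ i =>
      induction j using Fin.cases with
      | zero =>
        simp only [Fin.cons_zero, Fin.cons_succ, if_neg (Fin.succ_ne_zero i)]
        exact hKv (b i)
      | succ j =>
        have h := b.orthonormal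
        rw [orthonormal_iff_ite] at h
        have h2 := h i j
        rw [Submodule.coe_inner] at h2
        simp only [Fin.cons_succ]
        rw [h2]
        simp [Fin.succ_inj]
  · rw [Fin.range_cons, Submodule.span_insert]
    have h1 : Submodule.span ℝ (Set.range fun i => ((b i : EuclideanSpace ℝ (Fin (n+1))))) =
        (Submodule.span ℝ {v})ᗮ := by
      have : (Set.range fun i => ((b i : EuclideanSpace ℝ (Fin (n+1))))) =
          ((Submodule.span ℝ {v})ᗮ.subtype '' Set.range b) := by
        rw [← Set.range_comp]; rfl
      rw [this, Submodule.span_image]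
      rw [show Submodule.span ℝ (Set.range ⇑b) = ⊤ by
        rw [← b.coe_toBasis]; exact b.toBasis.span_eq]
      exact Submodule.map_subtype_top _
    rw [h1]
    rw [show Submodule.span ℝ {v} = (ℝ ∙ v) from rfl]
    rw [Submodule.sup_orthogonal_of_hasOrthogonalProjection]

lemma auxONB_coe (hv : ‖v‖ = 1)
    (b : OrthonormalBasis (Fin n) ℝ ((Submodule.span ℝ {v})ᗮ : Submodule ℝ _)) :
    ⇑(auxONB hv b) = Fin.cons v fun i => (b i : EuclideanSpace ℝ (Fin (n + 1))) := by
  rw [auxONB]; exact OrthonormalBasis.coe_mk _ _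

lemma aux_finrank (hv : ‖v‖ = 1) :
    Module.finrank ℝ ((Submodule.span ℝ {v})ᗮ : Submodule ℝ (EuclideanSpace ℝ (Fin (n+1)))) = n := by
  have hvne : v ≠ 0 := by intro h; rw [h, norm_zero] at hv; norm_num at hv
  have h1 : Module.finrank ℝ (Submodule.span ℝ {v} : Submodule ℝ (EuclideanSpace ℝ (Fin (n+1)))) = 1 :=
    finrank_span_singleton hvne
  have h2 := Submodule.finrank_add_finrank_orthogonal
    (K := (Submodule.span ℝ {v} : Submodule ℝ (EuclideanSpace ℝ (Fin (n+1)))))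
  rw [h1, finrank_euclideanSpace_fin] at h2
  omega

lemma aux_measurePreserving (hv : ‖v‖ = 1) :
    MeasurePreserving
      (fun q : ℝ × ((Submodule.span ℝ {v})ᗮ : Submodule ℝ _) =>
        q.1 • v + (q.2 : EuclideanSpace ℝ (Fin (n + 1))))
      (volume.prod volume) volume := by
  set K : Submodule ℝ (EuclideanSpace ℝ (Fin (n+1))) := (Submodule.span ℝ {v})ᗮ with hK
  let b : OrthonormalBasis (Fin n) ℝ K := (stdOrthonormalBasis ℝ K).reindex (finCongr (aux_finrank hv))
  let B := auxONB hv b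
  have h1 : MeasurePreserving
      (Prod.map (id : ℝ → ℝ) (fun w : K => ((MeasurableEquiv.toLp 2 (Fin n → ℝ)).symm) (b.repr w)))
      (volume.prod volume) (volume.prod volume) :=
    (MeasurePreserving.id _).prod
      ((EuclideanSpace.volume_preserving_symm_measurableEquiv_toLp (Fin n)).comp b.measurePreserving_repr)
  have h2 := (volume_preserving_piFinSuccAbove (fun _ : Fin (n+1) => ℝ) 0).symm
  have h3 := (EuclideanSpace.volume_preserving_symm_measurableEquiv_toLp (Fin (n+1))).symm
  have h4 := B.measurePreserving_repr_symm
  have hcomp := (h4.comp (h3.comp (h2.comp h1)))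
  have hfun : (⇑B.repr.symm) ∘ (⇑(MeasurableEquiv.toLp 2 (Fin (n+1) → ℝ)).symm.symm) ∘
      (⇑(MeasurableEquiv.piFinSuccAbove (fun _ : Fin (n+1) => ℝ) 0).symm) ∘
      (Prod.map (id : ℝ → ℝ) (fun w : K => ((MeasurableEquiv.toLp 2 (Fin n → ℝ)).symm) (b.repr w)))
      = fun q : ℝ × K => q.1 • v + (q.2 : EuclideanSpace ℝ (Fin (n + 1))) := by
    funext q
    obtain ⟨t, w⟩ := q
    simp only [Function.comp_apply, Prod.map_apply, id_eq]
    rw [← OrthonormalBasis.sum_repr_symm]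
    simp only [MeasurableEquiv.piFinSuccAbove, MeasurableEquiv.symm_mk, MeasurableEquiv.coe_mk,
      Equiv.symm_symm, Fin.insertNthEquiv_zero, Fin.consEquiv_apply,
      MeasurableEquiv.symm_symm, MeasurableEquiv.coe_toLp, MeasurableEquiv.coe_toLp_symm,
      PiLp.toLp_apply, WithLp.ofLp_toLp, WithLp.toLp_ofLp, Fin.sum_univ_succ, Fin.cons_zero,
      Fin.cons_succ]
    have hBc : ⇑B = Fin.cons v fun i => ((b i : EuclideanSpace ℝ (Fin (n+1)))) :=
      auxONB_coe hv b
    simp only [hBc, Fin.cons_zero, Fin.cons_succ]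
    congr 1
    have hcast : ∑ j, b.repr w j • ((b j : EuclideanSpace ℝ (Fin (n+1))))
        = ((∑ j, b.repr w j • b j : K) : EuclideanSpace ℝ (Fin (n+1))) := by norm_cast
    rw [hcast, b.sum_repr]
  rw [hfun] at hcomp
  exact hcomp


end AuxiliaryLemmas

set_option maxHeartbeats 1000000 in
theorem aux_main {p : ℕ} (hp : 1 ≤ p)
    (v : EuclideanSpace ℝ (Fin p)) (hv : ‖v‖ = 1) (c : ℝ) (hc : 0 ≤ c)
    (F : Set (EuclideanSpace ℝ (Fin p))) (hFmeas : MeasurableSet F)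
    (hFH : F ⊆ {x | ⟪x, v⟫ = c}) :
    Tendsto
      (fun δ : ℝ =>
        ((volume.withDensity fun x : EuclideanSpace ℝ (Fin p) =>
            ENNReal.ofReal ((2 * Real.pi) ^ (-(p : ℝ) / 2) * Real.exp (-‖x‖ ^ 2 / 2)))
            {y | ∃ x ∈ F, ∃ t : ℝ, 0 < t ∧ t ≤ δ ∧ y = x + t • v}).toReal / δ)
      (𝓝[>] 0)
      (𝓝 (∫ x in F, (2 * Real.pi) ^ (-(p : ℝ) / 2) * Real.exp (-‖x‖ ^ 2 / 2)
        ∂(Measure.map (fun w : (Submodule.span ℝ {v})ᗮ =>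
            c • v + (w : EuclideanSpace ℝ (Fin p))) volume))) := by
  obtain ⟨n, rfl⟩ : ∃ n, p = n + 1 := ⟨p - 1, (Nat.succ_pred_eq_of_pos hp).symm⟩
  set K : Submodule ℝ (EuclideanSpace ℝ (Fin (n+1))) := (Submodule.span ℝ {v})ᗮ with hKdef
  have hKv : ∀ w : K, ⟪(w : EuclideanSpace ℝ (Fin (n+1))), v⟫ = 0 := fun w =>
    Submodule.mem_orthogonal_singleton_iff_inner_left.mp w.2
  have hvv : ⟪v, v⟫ = 1 := by rw [real_inner_self_eq_norm_sq, hv]; norm_num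
  set C : ℝ := (2 * Real.pi) ^ (-((n+1 : ℕ) : ℝ) / 2) with hCdef
  have hCpos : 0 < C := Real.rpow_pos_of_pos (by positivity) _
  set ι : K → EuclideanSpace ℝ (Fin (n+1)) :=
    (fun w : K => c • v + (w : EuclideanSpace ℝ (Fin (n+1)))) with hιdef
  have hisom : Isometry ι := by
    have h1 : Isometry (fun x : EuclideanSpace ℝ (Fin (n+1)) => c • v + x) :=
      isometry_add_left (c • v)
    exact h1.comp isometry_subtype_coe
  have hemb : MeasurableEmbedding ι := hisom.isClosedEmbedding.measurableEmbedding
  set F' : Set K := ι ⁻¹' F with hF'def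
  have hF'meas : MeasurableSet F' := hisom.continuous.measurable hFmeas
  have hnorm : ∀ (t : ℝ) (w : K), ‖t • v + (w : EuclideanSpace ℝ (Fin (n+1)))‖^2
      = t^2 + ‖(w : EuclideanSpace ℝ (Fin (n+1)))‖^2 := by
    intro t w
    rw [norm_add_sq_real]
    have h1 : ⟪t • v, (w : EuclideanSpace ℝ (Fin (n+1)))⟫ = 0 := by
      rw [real_inner_smul_left, real_inner_comm, hKv w, mul_zero]
    rw [h1, norm_smul, hv]
    simp [mul_pow, sq_abs]
  -- integrability of the Gaussian on K
  have hJint : Integrable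
      (fun w : K => C * Real.exp (-‖(w : EuclideanSpace ℝ (Fin (n+1)))‖^2/2)) := by
    have h1 := GaussianFourier.integrable_cexp_neg_mul_sq_norm_add (V := K)
      (b := (1/2 : ℂ)) (by norm_num) 0 (0 : K)
    have h2 := h1.re
    have h3 : Integrable (fun w : K => Real.exp (-(1/2) * ‖w‖^2)) := by
      refine h2.congr (Filter.Eventually.of_forall fun w => ?_)
      beta_reduce
      have he : (-(1/2 : ℂ) * (‖w‖ : ℂ)^2 + 0 * ((⟪(0:K), w⟫ : ℝ) : ℂ))
          = ((-(1/2) * ‖w‖^2 : ℝ) : ℂ) := by push_cast; ring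
      rw [he, ← Complex.ofReal_exp]
      exact RCLike.ofReal_re _
    refine (h3.const_mul C).congr (Filter.Eventually.of_forall fun w => ?_)
    beta_reduce
    have hnc : ‖(w : EuclideanSpace ℝ (Fin (n+1)))‖ = ‖w‖ := rfl
    rw [hnc]
    congr 1
    ring
  set Jr : ℝ := ∫ w in F', C * Real.exp (-‖(w : EuclideanSpace ℝ (Fin (n+1)))‖^2/2) with hJrdef
  have hJrnn : 0 ≤ Jr := by
    apply integral_nonneg
    intro w
    positivity
  -- the right-hand side
  have hRHS : (∫ x in F, (2 * Real.pi) ^ (-((n+1 : ℕ) : ℝ) / 2) * Real.exp (-‖x‖ ^ 2 / 2)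
        ∂(Measure.map ι volume)) = Real.exp (-c^2/2) * Jr := by
    rw [hemb.setIntegral_map, hJrdef, ← MeasureTheory.integral_const_mul]
    refine setIntegral_congr_fun hF'meas (fun w _ => ?_)
    have : ι w = c • v + (w : EuclideanSpace ℝ (Fin (n+1))) := rfl
    rw [this, hnorm c w,
      show (-(c^2 + ‖(w : EuclideanSpace ℝ (Fin (n+1)))‖^2)/2)
        = (-c^2/2) + (-‖(w : EuclideanSpace ℝ (Fin (n+1)))‖^2/2) by ring, Real.exp_add]
    ring
  -- measurability of the normal translate set
  have hNmeas : ∀ δ : ℝ, MeasurableSet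
      {y : EuclideanSpace ℝ (Fin (n+1)) | ∃ x ∈ F, ∃ t : ℝ, 0 < t ∧ t ≤ δ ∧ y = x + t • v} := by
    intro δ
    have hset : {y : EuclideanSpace ℝ (Fin (n+1)) | ∃ x ∈ F, ∃ t : ℝ, 0 < t ∧ t ≤ δ ∧ y = x + t • v}
        = {y : EuclideanSpace ℝ (Fin (n+1)) | ⟪y, v⟫ ∈ Set.Ioc c (c+δ)} ∩
          ((fun y : EuclideanSpace ℝ (Fin (n+1)) => y - (⟪y, v⟫ - c) • v) ⁻¹' F) := by
      ext y
      simp only [Set.mem_setOf_eq, Set.mem_inter_iff, Set.mem_preimage, Set.mem_Ioc]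
      constructor
      · rintro ⟨x, hxF, t, ht0, htδ, rfl⟩
        have hxv : ⟪x, v⟫ = c := hFH hxF
        have hyv : ⟪x + t • v, v⟫ = c + t := by
          rw [inner_add_left, real_inner_smul_left, hvv, hxv]; ring
        refine ⟨⟨by rw [hyv]; linarith, by rw [hyv]; linarith⟩, ?_⟩
        rw [hyv]
        have : x + t • v - (c + t - c) • v = x := by module
        rw [this]; exact hxF
      · rintro ⟨⟨h1, h2⟩, h3⟩
        exact ⟨y - (⟪y, v⟫ - c) • v, h3, ⟪y, v⟫ - c, by linarith, by linarith, by module⟩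
    rw [hset]
    have hcont : Continuous fun y : EuclideanSpace ℝ (Fin (n+1)) => (⟪y, v⟫ : ℝ) :=
      continuous_id.inner continuous_const
    refine MeasurableSet.inter ?_ ?_
    · exact hcont.measurable measurableSet_Ioc
    · exact ((continuous_id.sub (((hcont.sub continuous_const)).smul
        continuous_const)).measurable) hFmeas
  -- the preimage identity
  have hpre : ∀ δ : ℝ,
      (fun q : ℝ × K => q.1 • v + (q.2 : EuclideanSpace ℝ (Fin (n+1)))) ⁻¹'
        {y | ∃ x ∈ F, ∃ t : ℝ, 0 < t ∧ t ≤ δ ∧ y = x + t • v}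
        = Set.Ioc c (c+δ) ×ˢ F' := by
    intro δ
    ext ⟨t, w⟩
    simp only [Set.mem_preimage, Set.mem_setOf_eq, Set.mem_prod, Set.mem_Ioc]
    constructor
    · rintro ⟨x, hxF, s, hs0, hsδ, hEq⟩
      have hxv : ⟪x, v⟫ = c := hFH hxF
      have hts : t = c + s := by
        have h := congrArg (fun y : EuclideanSpace ℝ (Fin (n+1)) => (⟪y, v⟫ : ℝ)) hEq
        simp only [inner_add_left, real_inner_smul_left, hvv, hKv w, hxv] at h
        linarith
      have hxw : x = c • v + (w : EuclideanSpace ℝ (Fin (n+1))) := by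
        have h2 : x + s • v = (c • v + (w : EuclideanSpace ℝ (Fin (n+1)))) + s • v := by
          rw [← hEq, hts]; module
        exact add_right_cancel h2
      refine ⟨⟨by linarith, by linarith⟩, ?_⟩
      have hw : ι w = x := hxw.symm
      exact Set.mem_preimage.mpr (hw ▸ hxF)
    · rintro ⟨⟨htc, htcδ⟩, hwF'⟩
      refine ⟨c • v + (w : EuclideanSpace ℝ (Fin (n+1))), hwF', t - c, by linarith, by linarith, by module⟩
  have hIcont : Continuous fun t : ℝ => Real.exp (-t^2/2) :=
    Real.continuous_exp.comp (by fun_prop)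
  have hmp := aux_measurePreserving hv
  have hd : Measurable fun y : EuclideanSpace ℝ (Fin (n+1)) =>
      ENNReal.ofReal ((2 * Real.pi) ^ (-((n+1 : ℕ) : ℝ) / 2) * Real.exp (-‖y‖ ^ 2 / 2)) := by
    apply Measurable.ennreal_ofReal
    exact (continuous_const.mul (Real.continuous_exp.comp (by fun_prop))).measurable
  have hf : Measurable fun t : ℝ => ENNReal.ofReal (Real.exp (-t^2/2)) :=
    hIcont.measurable.ennreal_ofReal
  have hg : Measurable fun w : K =>
      ENNReal.ofReal (C * Real.exp (-‖(w : EuclideanSpace ℝ (Fin (n+1)))‖^2/2)) := by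
    apply Measurable.ennreal_ofReal
    exact (continuous_const.mul (Real.continuous_exp.comp (by fun_prop))).measurable
  -- the key computation
  have key : ∀ δ : ℝ, 0 < δ →
      ((volume.withDensity fun x : EuclideanSpace ℝ (Fin (n+1)) =>
          ENNReal.ofReal ((2 * Real.pi) ^ (-((n+1 : ℕ) : ℝ) / 2) * Real.exp (-‖x‖ ^ 2 / 2)))
          {y | ∃ x ∈ F, ∃ t : ℝ, 0 < t ∧ t ≤ δ ∧ y = x + t • v}).toReal
        = (∫ t in c..(c+δ), Real.exp (-t^2/2)) * Jr := by
    intro δ hδ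
    have hIint : IntegrableOn (fun t : ℝ => Real.exp (-t^2/2)) (Set.Ioc c (c+δ)) :=
      hIcont.integrableOn_Ioc
    have hInn : (0:ℝ) ≤ ∫ t in Set.Ioc c (c+δ), Real.exp (-t^2/2) :=
      setIntegral_nonneg measurableSet_Ioc fun t _ => (Real.exp_pos _).le
    have hval : ((volume.withDensity fun x : EuclideanSpace ℝ (Fin (n+1)) =>
          ENNReal.ofReal ((2 * Real.pi) ^ (-((n+1 : ℕ) : ℝ) / 2) * Real.exp (-‖x‖ ^ 2 / 2)))
          {y | ∃ x ∈ F, ∃ t : ℝ, 0 < t ∧ t ≤ δ ∧ y = x + t • v})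
        = ENNReal.ofReal ((∫ t in Set.Ioc c (c+δ), Real.exp (-t^2/2)) * Jr) := by
      calc ((volume.withDensity fun x : EuclideanSpace ℝ (Fin (n+1)) =>
          ENNReal.ofReal ((2 * Real.pi) ^ (-((n+1 : ℕ) : ℝ) / 2) * Real.exp (-‖x‖ ^ 2 / 2)))
          {y | ∃ x ∈ F, ∃ t : ℝ, 0 < t ∧ t ≤ δ ∧ y = x + t • v})
          = ∫⁻ y in {y | ∃ x ∈ F, ∃ t : ℝ, 0 < t ∧ t ≤ δ ∧ y = x + t • v},
              ENNReal.ofReal ((2 * Real.pi) ^ (-((n+1 : ℕ) : ℝ) / 2) * Real.exp (-‖y‖ ^ 2 / 2))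
              ∂volume := withDensity_apply _ (hNmeas δ)
        _ = ∫⁻ q in Set.Ioc c (c+δ) ×ˢ F',
              ENNReal.ofReal ((2 * Real.pi) ^ (-((n+1 : ℕ) : ℝ) / 2) *
                Real.exp (-‖q.1 • v + (q.2 : EuclideanSpace ℝ (Fin (n+1)))‖ ^ 2 / 2))
              ∂(volume.prod volume) := by
            rw [← hmp.map_eq, Measure.restrict_map hmp.measurable (hNmeas δ),
              lintegral_map hd hmp.measurable, hpre δ]
        _ = ∫⁻ q : ℝ × K, (ENNReal.ofReal (Real.exp (-q.1^2/2))) *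
              (ENNReal.ofReal (C * Real.exp (-‖(q.2 : EuclideanSpace ℝ (Fin (n+1)))‖^2/2)))
              ∂((volume.restrict (Set.Ioc c (c+δ))).prod (volume.restrict F')) := by
            rw [← Measure.prod_restrict]
            refine lintegral_congr fun q => ?_
            rw [hnorm q.1 q.2, ← ENNReal.ofReal_mul (Real.exp_pos _).le]
            congr 1
            rw [show (-(q.1^2 + ‖(q.2 : EuclideanSpace ℝ (Fin (n+1)))‖^2)/2 : ℝ)
                = (-q.1^2/2) + (-‖(q.2 : EuclideanSpace ℝ (Fin (n+1)))‖^2/2) by ring,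
              Real.exp_add]
            ring
        _ = (∫⁻ t in Set.Ioc c (c+δ), ENNReal.ofReal (Real.exp (-t^2/2))) *
              ∫⁻ w in F', ENNReal.ofReal
                (C * Real.exp (-‖(w : EuclideanSpace ℝ (Fin (n+1)))‖^2/2)) :=
            lintegral_prod_mul hf.aemeasurable hg.aemeasurable
        _ = ENNReal.ofReal (∫ t in Set.Ioc c (c+δ), Real.exp (-t^2/2)) * ENNReal.ofReal Jr := by
            rw [← ofReal_integral_eq_lintegral_ofReal hIint
                (ae_of_all _ fun t => (Real.exp_pos _).le),
              ← ofReal_integral_eq_lintegral_ofReal hJint.integrableOn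
                (ae_of_all _ fun w => by positivity)]
        _ = ENNReal.ofReal ((∫ t in Set.Ioc c (c+δ), Real.exp (-t^2/2)) * Jr) :=
            (ENNReal.ofReal_mul hInn).symm
    rw [hval, ENNReal.toReal_ofReal (mul_nonneg hInn hJrnn),
      intervalIntegral.integral_of_le (by linarith : c ≤ c + δ)]
  -- the limit
  have hG : HasDerivAt (fun u => ∫ t in c..u, Real.exp (-t^2/2)) (Real.exp (-c^2/2)) c :=
    intervalIntegral.integral_hasDerivAt_right (hIcont.intervalIntegrable _ _)
      (hIcont.stronglyMeasurableAtFilter _ _) hIcont.continuousAt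
  have hslope := hasDerivAt_iff_tendsto_slope.mp hG
  have hmap : Tendsto (fun δ : ℝ => c + δ) (𝓝[>] 0) (𝓝[≠] c) := by
    have h1 : Tendsto (fun δ : ℝ => c + δ) (𝓝[>] 0) (𝓝 c) := by
      have h0 : Tendsto (fun δ : ℝ => c + δ) (𝓝 (0:ℝ)) (𝓝 c) := by
        simpa using (continuous_add_left c).tendsto (0:ℝ)
      exact h0.mono_left nhdsWithin_le_nhds
    refine tendsto_nhdsWithin_of_tendsto_nhds_of_eventually_within _ h1 ?_
    filter_upwards [self_mem_nhdsWithin] with δ hδ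
    simp only [Set.mem_Ioi] at hδ
    simp only [Set.mem_compl_iff, Set.mem_singleton_iff]
    intro h
    nlinarith [h]
  have hlim : Tendsto (fun δ : ℝ => (∫ t in c..(c+δ), Real.exp (-t^2/2)) / δ)
      (𝓝[>] 0) (𝓝 (Real.exp (-c^2/2))) := by
    have h2 := hslope.comp hmap
    refine Tendsto.congr' ?_ h2
    filter_upwards [self_mem_nhdsWithin] with δ hδ
    simp only [Set.mem_Ioi] at hδ
    simp only [Function.comp_apply, slope_def_field]
    rw [intervalIntegral.integral_same, sub_zero, add_sub_cancel_left]
  -- conclusion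
  rw [hRHS]
  have hfinal := hlim.mul_const Jr
  refine Tendsto.congr' ?_ hfinal
  filter_upwards [self_mem_nhdsWithin] with δ hδ
  simp only [Set.mem_Ioi] at hδ
  rw [key δ hδ]
  ring

/-- For a Borel subset `F` of the hyperplane `H = {x : ⟨x, v⟩ = c}` (with `v`
a unit vector, `c ≥ 0`) and `N_F(δ) = {x + t v : x ∈ F, 0 < t ≤ δ}`, one has
`lim_{δ ↓ 0} γ_p(N_F(δ))/δ = ∫_F φ_p dσ`, where `σ` is the surface measure on `H`. -/
theorem tendsto_gaussian_normal_translate_div {p : ℕ} (hp : 1 ≤ p)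
    (v : EuclideanSpace ℝ (Fin p)) (hv : ‖v‖ = 1) (c : ℝ) (hc : 0 ≤ c)
    (F : Set (EuclideanSpace ℝ (Fin p))) (hFmeas : MeasurableSet F)
    (hFH : F ⊆ {x | ⟪x, v⟫ = c}) :
    Tendsto
      (fun δ : ℝ =>
        (stdGaussian p {y | ∃ x ∈ F, ∃ t : ℝ, 0 < t ∧ t ≤ δ ∧ y = x + t • v}).toReal / δ)
      (𝓝[>] 0) (𝓝 (∫ x in F, stdGaussianDensity p x ∂(surfMeasure v c))) := by
  unfold stdGaussian stdGaussianDensity surfMeasure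
  exact aux_main hp v hv c hc F hFmeas hFH
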